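/- (Convergence of Clustered Value Iteration) Consider a finite MDP with nonnegative bounded rewards and discount $\gamma\in(0,1)$, with a product action space over clusters. Initialize $V_0 = 0$ and an arbitrary policy $\Pi^0$. At each iteration $k$, pick a cluster $c_k$, set $V_{k+1}(s) = \mathbf{T}^{c_k}_{\Pi^k} V_k(s)$ for all $s$, update the policy component for $c_k$ to a maximizer and keep other components fixed. Then the sequence $\{V_k(s)\}$ is monotonically nondecreasing and bounded for every $s$, and hence converges to some $\widehat{V} \in \mathbb{R}^{|\mathcal{S}|}$. -/

import Mathlib

open Filter

/-- Convergence of Clustered Value Iteration: the iterates are monotone, bounded,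
and converge pointwise to some limit. -/
theorem cvi_convergence {S C : Type*} [Fintype S] [Nonempty S]
    [Fintype C] [DecidableEq C]
    {A : C → Type*} [∀ c, Fintype (A c)] [∀ c, Nonempty (A c)]
    (p : S → (∀ c, A c) → S → ℝ) (hp_nonneg : ∀ s a s', 0 ≤ p s a s')
    (hp_sum : ∀ s a, ∑ s', p s a s' = 1)
    (r : S → (∀ c, A c) → ℝ) (hr_nonneg : ∀ s a, 0 ≤ r s a)
    (R : ℝ) (hR : ∀ s a, r s a ≤ R)
    (γ : ℝ) (hγ0 : 0 < γ) (hγ1 : γ < 1)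
    (V : ℕ → S → ℝ) (hV0 : V 0 = 0)
    (Pi : ℕ → S → ∀ c, A c) (ck : ℕ → C)
    (hVk : ∀ k s, V (k + 1) s =
      ⨆ αc : A (ck k), ∑ s', p s (Function.update (Pi k s) (ck k) αc) s' *
        (r s (Function.update (Pi k s) (ck k) αc) + γ * V k s'))
    (hmax : ∀ k s, ∑ s', p s (Pi (k + 1) s) s' * (r s (Pi (k + 1) s) + γ * V k s')
      = V (k + 1) s)
    (hkeep : ∀ k s c, c ≠ ck k → Pi (k + 1) s c = Pi k s c) :
    (∀ s, Monotone fun k => V k s) ∧ (∃ M : ℝ, ∀ k s, V k s ≤ M) ∧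
      ∃ Vhat : S → ℝ, ∀ s, Tendsto (fun k => V k s) atTop (nhds (Vhat s)) := by
  have hRnn : 0 ≤ R := le_trans (hr_nonneg Classical.ofNonempty Classical.ofNonempty)
    (hR _ _)
  have h1γ : 0 < 1 - γ := by linarith
  set M : ℝ := R / (1 - γ) with hM
  have hMnn : 0 ≤ M := div_nonneg hRnn h1γ.le
  have hMfix : R + γ * M = M := by
    rw [hM]
    linear_combination (-1 : ℝ) * div_mul_cancel₀ R h1γ.ne'
  -- boundedness
  have hbdd : ∀ k s, V k s ≤ M := by
    intro k
    induction k with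
    | zero => intro s; simp [hV0, hMnn]
    | succ k ih =>
      intro s
      rw [hVk k s]
      refine ciSup_le fun αc => ?_
      calc ∑ s', p s (Function.update (Pi k s) (ck k) αc) s' *
            (r s (Function.update (Pi k s) (ck k) αc) + γ * V k s')
          ≤ ∑ s', p s (Function.update (Pi k s) (ck k) αc) s' * (R + γ * M) := by
            refine Finset.sum_le_sum fun s' _ => ?_
            refine mul_le_mul_of_nonneg_left ?_ (hp_nonneg _ _ _)
            have := ih s'
            have := hR s (Function.update (Pi k s) (ck k) αc)
            nlinarith [hγ0.le]
        _ = M := by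
            rw [← Finset.sum_mul, hp_sum, one_mul, hMfix]
  -- monotone step
  have hmono : ∀ k s, V k s ≤ V (k + 1) s := by
    intro k
    induction k with
    | zero =>
      intro s
      rw [hVk 0 s]
      set f := fun αc : A (ck 0) => ∑ s', p s (Function.update (Pi 0 s) (ck 0) αc) s' *
        (r s (Function.update (Pi 0 s) (ck 0) αc) + γ * V 0 s') with hf
      have h2 : f (Pi 0 s (ck 0)) ≤ ⨆ αc, f αc :=
        le_ciSup (Set.Finite.bddAbove (Set.finite_range f)) _
      have h1 : (0:ℝ) ≤ f (Pi 0 s (ck 0)) := by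
        simp only [hf, Function.update_eq_self]
        refine Finset.sum_nonneg fun s' _ => mul_nonneg (hp_nonneg _ _ _) ?_
        have := hr_nonneg s (Pi 0 s)
        have : V 0 s' = 0 := by rw [hV0]; rfl
        nlinarith [hr_nonneg s (Pi 0 s), hγ0.le]
      have : V 0 s = 0 := by rw [hV0]; rfl
      rw [this]
      exact h1.trans h2
    | succ k ih =>
      intro s
      rw [hVk (k+1) s, ← hmax k s]
      set f := fun αc : A (ck (k+1)) => ∑ s', p s (Function.update (Pi (k+1) s) (ck (k+1)) αc) s' *
        (r s (Function.update (Pi (k+1) s) (ck (k+1)) αc) + γ * V (k+1) s') with hf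
      have h2 : f (Pi (k+1) s (ck (k+1))) ≤ ⨆ αc, f αc :=
        le_ciSup (Set.Finite.bddAbove (Set.finite_range f)) _
      have key : ∑ s', p s (Pi (k+1) s) s' * (r s (Pi (k+1) s) + γ * V k s')
          ≤ f (Pi (k+1) s (ck (k+1))) := by
        simp only [hf, Function.update_eq_self]
        refine Finset.sum_le_sum fun s' _ => ?_
        refine mul_le_mul_of_nonneg_left ?_ (hp_nonneg _ _ _)
        have := ih s'
        nlinarith [hγ0.le]
      exact key.trans h2
  have hmonotone : ∀ s, Monotone fun k => V k s :=
    fun s => monotone_nat_of_le_succ fun k => hmono k s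
  refine ⟨hmonotone, ⟨M, hbdd⟩, fun s => ⨆ k, V k s, fun s => ?_⟩
  exact tendsto_atTop_ciSup (hmonotone s) ⟨M, by rintro x ⟨k, rfl⟩; exact hbdd k s⟩
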